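/- Let Y₁,...,Y_n be independent random variables taking values in ℝ^m with ℓ_i[j] ≤ Y_i[j] ≤ u_i[j] almost surely for all i,j, let Y = Σ_i Y_i and μ = E[Y]. Then for every δ > 0, Pr[‖Y − μ‖₁ ≥ 1.12·Σ_{j=1}^m sqrt(Σ_{i=1}^n (u_i[j] − ℓ_i[j])²) + δ] ≤ 2·exp(−2δ² / Σ_{i=1}^n (Σ_{j=1}^m (u_i[j] − ℓ_i[j]))²). -/

import Mathlib

open Real MeasureTheory ProbabilityTheory


-- derivative setup
lemma hoeff_core (p : ℝ) (hp0 : 0 ≤ p) (hp1 : p ≤ 1) (h : ℝ) :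
    (1 - p) + p * Real.exp h ≤ Real.exp (p * h + h ^ 2 / 8) := by
  -- g t = 1 - p + p * exp t > 0
  set g : ℝ → ℝ := fun t => 1 - p + p * Real.exp t with hg
  have hgpos : ∀ t, 0 < g t := by
    intro t
    rcases eq_or_lt_of_le hp1 with h1 | h1
    · simp [hg, ← h1]; positivity
    · have : 0 < 1 - p := by linarith
      have : 0 ≤ p * Real.exp t := by positivity
      simp only [hg]; linarith
  -- D t = p*t + t^2/8 - log (g t), D 0 = 0
  set D : ℝ → ℝ := fun t => p * t + t ^ 2 / 8 - Real.log (g t) with hD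
  set D' : ℝ → ℝ := fun t => p + t / 4 - p * Real.exp t / g t with hD'
  have hDd : ∀ t, HasDerivAt D (D' t) t := by
    intro t
    have hgd : HasDerivAt g (p * Real.exp t) t := by
      exact ((Real.hasDerivAt_exp t).const_mul p).const_add (1 - p)
    have hlog : HasDerivAt (fun s => Real.log (g s)) (p * Real.exp t / g t) t :=
      hgd.log (ne_of_gt (hgpos t))
    have h1 : HasDerivAt (fun s => p * s + s ^ 2 / 8) (p + t / 4) t := by
      have := ((hasDerivAt_id t).const_mul p).add
        (((hasDerivAt_pow 2 t)).div_const 8)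
      exact this.congr_deriv (by norm_num; ring)
    exact h1.sub hlog
  have hD'd : ∀ t, HasDerivAt D' (1 / 4 - p * Real.exp t * (1 - p) / (g t) ^ 2) t := by
    intro t
    have hgd : HasDerivAt g (p * Real.exp t) t := by
      exact ((Real.hasDerivAt_exp t).const_mul p).const_add (1 - p)
    have hnum : HasDerivAt (fun s => p * Real.exp s) (p * Real.exp t) t :=
      (Real.hasDerivAt_exp t).const_mul p
    have hdiv : HasDerivAt (fun s => p * Real.exp s / g s)
        ((p * Real.exp t * g t - p * Real.exp t * (p * Real.exp t)) / (g t) ^ 2) t :=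
      hnum.div hgd (ne_of_gt (hgpos t))
    have h1 : HasDerivAt (fun s => p + s / 4) (1 / 4) t := by
      simpa using ((hasDerivAt_id t).div_const 4).const_add p
    have := h1.sub hdiv
    refine this.congr_deriv ?_
    have : p * Real.exp t * g t - p * Real.exp t * (p * Real.exp t)
        = p * Real.exp t * (1 - p) := by simp only [hg]; ring
    rw [this]
  have hD'nonneg : ∀ t, 0 ≤ 1 / 4 - p * Real.exp t * (1 - p) / (g t) ^ 2 := by
    intro t
    rw [sub_nonneg, div_le_iff₀ (pow_pos (hgpos t) 2)]
    have h4 : 4 * (p * Real.exp t) * (1 - p) ≤ (1 - p + p * Real.exp t) ^ 2 := by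
      nlinarith [sq_nonneg (1 - p - p * Real.exp t)]
    calc p * Real.exp t * (1 - p) ≤ (1 - p + p * Real.exp t) ^ 2 / 4 := by nlinarith
    _ = 1 / 4 * g t ^ 2 := by simp only [hg]; ring
  have hD'mono : Monotone D' := by
    have : ∀ t, 0 ≤ deriv D' t := fun t => by
      rw [(hD'd t).deriv]; exact hD'nonneg t
    exact monotone_of_deriv_nonneg (fun t => (hD'd t).differentiableAt) this
  have hD'0 : D' 0 = 0 := by
    have : (1:ℝ) - p + p * Real.exp 0 = 1 := by simp
    simp only [hD', hg, this]
    simp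
  have hDnonneg : ∀ t, 0 ≤ D t := by
    intro t
    have hD0 : D 0 = 0 := by simp [hD, hg]
    rcases le_or_gt 0 t with ht | ht
    · have hmono : MonotoneOn D (Set.Ici 0) := by
        apply monotoneOn_of_deriv_nonneg (convex_Ici 0)
          (fun s _ => (hDd s).differentiableAt.continuousAt.continuousWithinAt)
          (fun s _ => (hDd s).differentiableAt.differentiableWithinAt)
        intro s hs
        rw [(hDd s).deriv]
        rw [interior_Ici] at hs
        have : D' 0 ≤ D' s := hD'mono (le_of_lt hs)
        rw [hD'0] at this; exact this
      have := hmono (Set.self_mem_Ici) (Set.mem_Ici.mpr ht) ht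
      rw [hD0] at this; exact this
    · have hanti : AntitoneOn D (Set.Iic 0) := by
        apply antitoneOn_of_deriv_nonpos (convex_Iic 0)
          (fun s _ => (hDd s).differentiableAt.continuousAt.continuousWithinAt)
          (fun s _ => (hDd s).differentiableAt.differentiableWithinAt)
        intro s hs
        rw [(hDd s).deriv]
        rw [interior_Iic] at hs
        have : D' s ≤ D' 0 := hD'mono (le_of_lt hs)
        rw [hD'0] at this; exact this
      have := hanti (Set.mem_Iic.mpr (le_of_lt ht)) Set.self_mem_Iic (le_of_lt ht)
      rw [hD0] at this; exact this
  have := hDnonneg h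
  simp only [hD] at this
  have hlog : Real.log (g h) ≤ p * h + h ^ 2 / 8 := by linarith
  calc (1 - p) + p * Real.exp h = g h := by simp [hg]
  _ ≤ Real.exp (p * h + h ^ 2 / 8) := by
      rw [← Real.exp_log (hgpos h)]; exact Real.exp_le_exp.mpr hlog

lemma hoeff_mgf {Ω' : Type*} [MeasurableSpace Ω'] (ν : Measure Ω') [IsProbabilityMeasure ν]
    (X : Ω' → ℝ) (hX : Measurable X) (a b : ℝ) (hab : ∀ ω, X ω ∈ Set.Icc a b)
    (hmean : ∫ ω, X ω ∂ν = 0) (t : ℝ) :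
    ∫ ω, Real.exp (t * X ω) ∂ν ≤ Real.exp (t ^ 2 * (b - a) ^ 2 / 8) := by
  obtain ⟨ω₀⟩ : Nonempty Ω' := by
    by_contra hc
    rw [not_nonempty_iff] at hc
    have := measure_univ (μ := ν)
    simp [Set.univ_eq_empty_iff.mpr hc] at this
  have hXint : Integrable X ν := by
    refine ⟨hX.aestronglyMeasurable, HasFiniteIntegral.of_bounded
      (C := max |a| |b|) (Filter.Eventually.of_forall fun ω => ?_)⟩
    obtain ⟨h1, h2⟩ := hab ω
    rw [Real.norm_eq_abs, abs_le]
    constructor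
    · exact le_trans (neg_le_neg (le_max_left |a| |b|)) (neg_abs_le a |>.trans h1)
    · exact h2.trans ((le_abs_self b).trans (le_max_right _ _))
  have hale : a ≤ b := (hab ω₀).1.trans (hab ω₀).2
  have ha0 : a ≤ 0 := by
    have : ∫ _, a ∂ν ≤ ∫ ω, X ω ∂ν :=
      integral_mono (integrable_const a) hXint fun ω => (hab ω).1
    simpa [hmean] using this
  have hb0 : 0 ≤ b := by
    have : ∫ ω, X ω ∂ν ≤ ∫ _, b ∂ν :=
      integral_mono hXint (integrable_const b) fun ω => (hab ω).2
    simpa [hmean] using this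
  rcases eq_or_lt_of_le hale with heq | hlt
  · -- a = b forces a = 0 = b, X = 0
    have ha : a = 0 := le_antisymm ha0 (heq ▸ hb0)
    have hXz : ∀ ω, X ω = 0 := fun ω =>
      le_antisymm ((hab ω).2.trans (heq ▸ ha).le) (ha ▸ (hab ω).1)
    simp only [hXz, mul_zero, Real.exp_zero, integral_const, measure_univ,
      ENNReal.toReal_one, probReal_univ, smul_eq_mul, mul_one]
    exact Real.one_le_exp (by positivity)
  · set p : ℝ := -a / (b - a) with hp
    have hba : 0 < b - a := sub_pos.mpr hlt
    have hp0 : 0 ≤ p := div_nonneg (neg_nonneg.mpr ha0) hba.le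
    have hp1 : p ≤ 1 := by
      rw [div_le_one hba]; linarith
    -- pointwise convexity bound
    have hpt : ∀ ω, Real.exp (t * X ω) ≤
        ((b - X ω) * Real.exp (t * a) + (X ω - a) * Real.exp (t * b)) / (b - a) := by
      intro ω
      obtain ⟨h1, h2⟩ := hab ω
      have hcvx := convexOn_exp.2 (Set.mem_univ (t * a)) (Set.mem_univ (t * b))
        (div_nonneg (show (0:ℝ) ≤ b - X ω by linarith) hba.le)
        (div_nonneg (show (0:ℝ) ≤ X ω - a by linarith) hba.le)
        (show (b - X ω) / (b - a) + (X ω - a) / (b - a) = 1 by field_simp; ring)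
      have he : (b - X ω) / (b - a) * (t * a) + (X ω - a) / (b - a) * (t * b)
          = t * X ω := by field_simp; ring
      simp only [smul_eq_mul] at hcvx
      rw [he] at hcvx
      calc Real.exp (t * X ω)
          ≤ (b - X ω) / (b - a) * Real.exp (t * a)
            + (X ω - a) / (b - a) * Real.exp (t * b) := by
            simpa [smul_eq_mul] using hcvx
        _ = ((b - X ω) * Real.exp (t * a) + (X ω - a) * Real.exp (t * b)) / (b - a) := by
            ring
    have hExpInt : Integrable (fun ω => Real.exp (t * X ω)) ν := by
      refine ⟨(Real.measurable_exp.comp (hX.const_mul t)).aestronglyMeasurable,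
        HasFiniteIntegral.of_bounded (C := Real.exp (|t| * max |a| |b|))
        (Filter.Eventually.of_forall fun ω => ?_)⟩
      rw [Real.norm_eq_abs, Real.abs_exp]
      apply Real.exp_le_exp.mpr
      calc t * X ω ≤ |t * X ω| := le_abs_self _
        _ = |t| * |X ω| := abs_mul t (X ω)
        _ ≤ |t| * max |a| |b| := by
            apply mul_le_mul_of_nonneg_left _ (abs_nonneg t)
            obtain ⟨h1, h2⟩ := hab ω
            rw [abs_le]
            constructor
            · exact le_trans (neg_le_neg (le_max_left |a| |b|)) (neg_abs_le a |>.trans h1)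
            · exact h2.trans ((le_abs_self b).trans (le_max_right _ _))
    have hRHSint : Integrable
        (fun ω => ((b - X ω) * Real.exp (t * a) + (X ω - a) * Real.exp (t * b)) / (b - a)) ν := by
      apply Integrable.div_const
      exact (((integrable_const b).sub hXint).mul_const _).add
        ((hXint.sub (integrable_const a)).mul_const _)
    have hint : ∫ ω, Real.exp (t * X ω) ∂ν ≤
        (b * Real.exp (t * a) - a * Real.exp (t * b)) / (b - a) := by
      calc ∫ ω, Real.exp (t * X ω) ∂ν
          ≤ ∫ ω, ((b - X ω) * Real.exp (t * a) + (X ω - a) * Real.exp (t * b)) / (b - a) ∂ν :=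
            integral_mono hExpInt hRHSint hpt
        _ = (b * Real.exp (t * a) - a * Real.exp (t * b)) / (b - a) := by
            rw [integral_div]
            congr 1
            have hrw : ∀ ω, (b - X ω) * Real.exp (t * a) + (X ω - a) * Real.exp (t * b)
                = (b * Real.exp (t * a) - a * Real.exp (t * b))
                  + (Real.exp (t * b) - Real.exp (t * a)) * X ω := fun ω => by ring
            rw [integral_congr_ae (Filter.Eventually.of_forall hrw),
              integral_add (integrable_const _) (hXint.const_mul _),
              integral_const_mul, hmean]
            simp
    set h : ℝ := t * (b - a) with hh
    have key : (b * Real.exp (t * a) - a * Real.exp (t * b)) / (b - a)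
        = (1 - p) * Real.exp (-(p * h)) + p * Real.exp ((1 - p) * h) := by
      have e1 : -(p * h) = t * a := by
        rw [hp, hh]; field_simp
      have e2 : (1 - p) * h = t * b := by
        rw [hp, hh]; field_simp; ring
      rw [e1, e2]
      have : (1 : ℝ) - p = b / (b - a) := by rw [hp]; field_simp; ring
      rw [this, hp]
      field_simp
      ring
    refine (hint.trans_eq key).trans ?_
    have hfin : (1 - p) * Real.exp (-(p * h)) + p * Real.exp ((1 - p) * h)
        = Real.exp (-(p * h)) * ((1 - p) + p * Real.exp h) := by
      have e3 : Real.exp ((1 - p) * h) = Real.exp (-(p * h)) * Real.exp h := by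
        rw [← Real.exp_add]; congr 1; ring
      rw [e3]; ring
    rw [hfin]
    calc Real.exp (-(p * h)) * ((1 - p) + p * Real.exp h)
        ≤ Real.exp (-(p * h)) * Real.exp (p * h + h ^ 2 / 8) :=
          mul_le_mul_of_nonneg_left (hoeff_core p hp0 hp1 h) (Real.exp_nonneg _)
      _ = Real.exp (h ^ 2 / 8) := by rw [← Real.exp_add]; ring_nf
      _ = Real.exp (t ^ 2 * (b - a) ^ 2 / 8) := by rw [hh]; ring_nf

lemma integrable_of_abs_le {γ : Type*} [MeasurableSpace γ] (ν : Measure γ) [IsFiniteMeasure ν]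
    {f : γ → ℝ} (hf : AEStronglyMeasurable f ν) (K : ℝ) (hK : ∀ x, |f x| ≤ K) :
    Integrable f ν :=
  ⟨hf, HasFiniteIntegral.of_bounded (C := K)
    (Filter.Eventually.of_forall fun x => by rw [Real.norm_eq_abs]; exact hK x)⟩

lemma abs_integral_le_of_abs_le {γ : Type*} [MeasurableSpace γ] (ν : Measure γ)
    [IsProbabilityMeasure ν] {f : γ → ℝ} (K : ℝ) (hK : ∀ x, |f x| ≤ K) :
    |∫ x, f x ∂ν| ≤ K := by
  calc |∫ x, f x ∂ν| ≤ ∫ x, |f x| ∂ν := by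
        simpa [Real.norm_eq_abs] using norm_integral_le_integral_norm (μ := ν) f
    _ ≤ ∫ _, K ∂ν := by
        apply integral_mono_of_nonneg (Filter.Eventually.of_forall fun x => abs_nonneg _)
          (integrable_const K) (Filter.Eventually.of_forall hK)
    _ = K := by simp

lemma mcdiarmid_mgf {α : Type*} [MeasurableSpace α] :
    ∀ (n : ℕ) (ν : Fin n → Measure α) (_ : ∀ i, IsProbabilityMeasure (ν i))
    (F : (Fin n → α) → ℝ) (_ : Measurable F)
    (K : ℝ) (_ : ∀ x, |F x| ≤ K)
    (c : Fin n → ℝ) (_ : ∀ (i : Fin n) (x : Fin n → α) (v : α),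
      F (Function.update x i v) - F x ≤ c i) (L : ℝ),
    ∫ x, Real.exp (L * F x) ∂(Measure.pi ν) ≤
      Real.exp (L * ∫ x, F x ∂(Measure.pi ν) + L ^ 2 * (∑ i, (c i) ^ 2) / 8) := by
  intro n
  induction n with
  | zero =>
    intro ν hν F hF K hK c hc L
    haveI := fun i => hν i
    haveI : IsProbabilityMeasure (Measure.pi ν) := inferInstance
    rw [integral_unique, integral_unique]
    simp [measure_univ]
  | succ n ih =>
    intro ν hν F hF K hK c hc L
    haveI := fun i => hν i
    haveI : IsProbabilityMeasure (Measure.pi ν) := inferInstance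
    set ν' : Fin n → Measure α := fun j => ν ((0 : Fin (n+1)).succAbove j) with hν'def
    haveI : ∀ j, IsProbabilityMeasure (ν' j) := fun j => hν _
    haveI : IsProbabilityMeasure (Measure.pi ν') := inferInstance
    set e := MeasurableEquiv.piFinSuccAbove (fun _ : Fin (n+1) => α) 0 with he
    have hmp := measurePreserving_piFinSuccAbove ν 0
    -- G on the product space
    set G : α × (Fin n → α) → ℝ := fun q => F (Fin.cons q.1 q.2) with hG
    have hGesymm : ∀ q : α × (Fin n → α), F (e.symm q) = G q := by
      intro q
      simp only [hG, he, MeasurableEquiv.piFinSuccAbove, MeasurableEquiv.symm,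
        MeasurableEquiv.coe_mk]
      congr 1
      exact Fin.insertNth_zero' q.1 q.2
    have hGmeas : Measurable G := by
      have : Measurable fun q : α × (Fin n → α) => F (e.symm q) :=
        hF.comp e.symm.measurable
      simpa only [funext hGesymm] using this
    have hGbdd : ∀ q, |G q| ≤ K := fun q => hK _
    have hα : Nonempty α := by
      by_contra hcon
      rw [not_nonempty_iff] at hcon
      have := measure_univ (μ := ν 0)
      simp [Set.univ_eq_empty_iff.mpr hcon] at this
    -- the partially integrated function
    set h : (Fin n → α) → ℝ := fun y => ∫ v, G (v, y) ∂(ν 0) with hh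
    have hGswapmeas : StronglyMeasurable fun q : (Fin n → α) × α => G (q.2, q.1) :=
      (hGmeas.comp measurable_swap).stronglyMeasurable
    have hhmeas : Measurable h := by
      have := hGswapmeas.integral_prod_right' (ν := ν 0)
      exact this.measurable
    have hhbdd : ∀ y, |h y| ≤ K :=
      fun y => abs_integral_le_of_abs_le (ν 0) K (fun v => hGbdd (v, y))
    have hGyint : ∀ y, Integrable (fun v => G (v, y)) (ν 0) := fun y =>
      integrable_of_abs_le (ν 0) ((hGmeas.comp (measurable_prodMk_right)).aestronglyMeasurable)
        K (fun v => hGbdd (v, y))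
    -- inner Hoeffding bound
    have hc0 : ∀ y v, ∀ w, G (v, y) - G (w, y) ≤ c 0 := by
      intro y v w
      have := hc 0 (Fin.cons w y) v
      rwa [Fin.update_cons_zero] at this
    have hinner : ∀ y : Fin n → α,
        ∫ v, Real.exp (L * G (v, y)) ∂(ν 0) ≤
          Real.exp (L * h y + L ^ 2 * (c 0) ^ 2 / 8) := by
      intro y
      set X : α → ℝ := fun v => G (v, y) - h y with hX
      have hXmeas : Measurable X :=
        (hGmeas.comp measurable_prodMk_right).sub measurable_const
      have hXmean : ∫ v, X v ∂(ν 0) = 0 := by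
        rw [integral_sub (hGyint y) (integrable_const _)]
        simp [hh]
      set a : ℝ := (⨅ v, G (v, y)) - h y with ha
      have hbdd : BddBelow (Set.range fun v => G (v, y)) :=
        ⟨-K, by rintro z ⟨v, rfl⟩; exact neg_le_of_abs_le (hGbdd (v, y))⟩
      have hXbound : ∀ v, X v ∈ Set.Icc a (a + c 0) := by
        intro v
        constructor
        · exact sub_le_sub_right (ciInf_le hbdd v) _
        · have h1 : G (v, y) - c 0 ≤ ⨅ w, G (w, y) :=
            le_ciInf fun w => by have := hc0 y v w; linarith
          simp only [hX, ha]
          linarith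
      have := hoeff_mgf (ν 0) X hXmeas a (a + c 0) hXbound hXmean L
      have heq : ∀ v, Real.exp (L * G (v, y)) = Real.exp (L * h y) * Real.exp (L * X v) := by
        intro v
        rw [← Real.exp_add]
        congr 1
        simp only [hX]
        ring
      calc ∫ v, Real.exp (L * G (v, y)) ∂(ν 0)
          = Real.exp (L * h y) * ∫ v, Real.exp (L * X v) ∂(ν 0) := by
            rw [← integral_const_mul]
            exact integral_congr_ae (Filter.Eventually.of_forall heq)
        _ ≤ Real.exp (L * h y) * Real.exp (L ^ 2 * (c 0) ^ 2 / 8) := by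
            apply mul_le_mul_of_nonneg_left _ (Real.exp_nonneg _)
            simpa using this
        _ = Real.exp (L * h y + L ^ 2 * (c 0) ^ 2 / 8) := by
            rw [← Real.exp_add]
    -- bounded differences for h
    have hhc : ∀ (i : Fin n) (y : Fin n → α) (w : α),
        h (Function.update y i w) - h y ≤ c i.succ := by
      intro i y w
      have hsub : h (Function.update y i w) - h y
          = ∫ v, (G (v, Function.update y i w) - G (v, y)) ∂(ν 0) :=
        (integral_sub (hGyint _) (hGyint y)).symm
      rw [hsub]
      calc ∫ v, (G (v, Function.update y i w) - G (v, y)) ∂(ν 0)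
          ≤ ∫ _, c i.succ ∂(ν 0) := by
            apply integral_mono ((hGyint _).sub (hGyint y)) (integrable_const _)
            intro v
            show F (Fin.cons v (Function.update y i w)) - F (Fin.cons v y) ≤ c i.succ
            rw [Fin.cons_update]
            exact hc i.succ (Fin.cons v y) w
        _ = c i.succ := by simp
    -- integrability of exp(L*G) on the product
    have hexpabs : ∀ q : α × (Fin n → α), |Real.exp (L * G q)| ≤ Real.exp (|L| * K) := by
      intro q
      rw [Real.abs_exp]
      apply Real.exp_le_exp.mpr
      calc L * G q ≤ |L * G q| := le_abs_self _
        _ = |L| * |G q| := abs_mul _ _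
        _ ≤ |L| * K := mul_le_mul_of_nonneg_left (hGbdd q) (abs_nonneg L)
    have hexpyint : ∀ y, Integrable (fun v => Real.exp (L * G (v, y))) (ν 0) := fun y =>
      integrable_of_abs_le _
        (((hGmeas.comp measurable_prodMk_right).const_mul L).exp.aestronglyMeasurable)
        (Real.exp (|L| * K)) (fun v => hexpabs (v, y))
    have hexpGint : Integrable (fun q => Real.exp (L * G q)) ((ν 0).prod (Measure.pi ν')) :=
      integrable_of_abs_le _ ((hGmeas.const_mul L).exp.aestronglyMeasurable)
        (Real.exp (|L| * K)) hexpabs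
    have hGint : Integrable G ((ν 0).prod (Measure.pi ν')) :=
      integrable_of_abs_le _ hGmeas.aestronglyMeasurable K hGbdd
    -- main chain
    have step1 : ∫ x, Real.exp (L * F x) ∂(Measure.pi ν)
        = ∫ q, Real.exp (L * G q) ∂((ν 0).prod (Measure.pi ν')) := by
      rw [← hmp.integral_comp' (fun q => Real.exp (L * G q))]
      apply integral_congr_ae (Filter.Eventually.of_forall _)
      intro x
      congr 1
      rw [← hGesymm (e x), MeasurableEquiv.symm_apply_apply]
    have step2 : ∫ q, Real.exp (L * G q) ∂((ν 0).prod (Measure.pi ν'))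
        = ∫ y, ∫ v, Real.exp (L * G (v, y)) ∂(ν 0) ∂(Measure.pi ν') :=
      integral_prod_symm _ hexpGint
    have hinnermeas : StronglyMeasurable fun y => ∫ v, Real.exp (L * G (v, y)) ∂(ν 0) := by
      have : StronglyMeasurable fun q : (Fin n → α) × α => Real.exp (L * G (q.2, q.1)) :=
        ((Real.measurable_exp.comp ((hGmeas.comp measurable_swap).const_mul L))).stronglyMeasurable
      exact this.integral_prod_right'
    have step3 : ∫ y, ∫ v, Real.exp (L * G (v, y)) ∂(ν 0) ∂(Measure.pi ν')
        ≤ ∫ y, Real.exp (L * h y + L ^ 2 * (c 0) ^ 2 / 8) ∂(Measure.pi ν') := by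
      apply integral_mono _ _ hinner
      · apply integrable_of_abs_le _ hinnermeas.aestronglyMeasurable (Real.exp (|L| * K))
        intro y
        rw [abs_of_nonneg (integral_nonneg fun v => Real.exp_nonneg _)]
        calc ∫ v, Real.exp (L * G (v, y)) ∂(ν 0) ≤ ∫ _, Real.exp (|L| * K) ∂(ν 0) := by
              apply integral_mono (hexpyint y) (integrable_const _)
              intro v
              have := hexpabs (v, y)
              rwa [abs_of_nonneg (Real.exp_nonneg _)] at this
          _ = Real.exp (|L| * K) := by simp
      · apply integrable_of_abs_le _ (((hhmeas.const_mul L).add_const _).exp.aestronglyMeasurable)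
          (Real.exp (|L| * K + L ^ 2 * (c 0) ^ 2 / 8))
        intro y
        rw [Real.abs_exp]
        apply Real.exp_le_exp.mpr
        have : L * h y ≤ |L| * K := by
          calc L * h y ≤ |L| * |h y| := by rw [← abs_mul]; exact le_abs_self _
            _ ≤ |L| * K := mul_le_mul_of_nonneg_left (hhbdd _) (abs_nonneg L)
        linarith
    have step4 : ∫ y, Real.exp (L * h y + L ^ 2 * (c 0) ^ 2 / 8) ∂(Measure.pi ν')
        = Real.exp (L ^ 2 * (c 0) ^ 2 / 8) * ∫ y, Real.exp (L * h y) ∂(Measure.pi ν') := by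
      rw [← integral_const_mul]
      apply integral_congr_ae (Filter.Eventually.of_forall _)
      intro y
      rw [← Real.exp_add]
      ring_nf
    have step5 := ih ν' (fun j => hν _) h hhmeas K hhbdd (fun j => c j.succ)
      (fun i y w => hhc i y w) L
    have hhint : ∫ y, h y ∂(Measure.pi ν') = ∫ x, F x ∂(Measure.pi ν) := by
      rw [hh]
      have := integral_prod_symm G hGint
      rw [← this]
      rw [← hmp.integral_comp' G]
      apply integral_congr_ae (Filter.Eventually.of_forall _)
      intro x
      rw [← hGesymm (e x), MeasurableEquiv.symm_apply_apply]
    have hsum : (c 0) ^ 2 + ∑ j : Fin n, (c j.succ) ^ 2 = ∑ i : Fin (n+1), (c i) ^ 2 :=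
      (Fin.sum_univ_succ fun i => (c i) ^ 2).symm
    calc ∫ x, Real.exp (L * F x) ∂(Measure.pi ν)
        ≤ Real.exp (L ^ 2 * (c 0) ^ 2 / 8) * ∫ y, Real.exp (L * h y) ∂(Measure.pi ν') := by
          rw [step1, step2, ← step4]
          exact step3
      _ ≤ Real.exp (L ^ 2 * (c 0) ^ 2 / 8) *
          Real.exp (L * ∫ y, h y ∂(Measure.pi ν') + L ^ 2 * (∑ j : Fin n, (c j.succ) ^ 2) / 8) :=
          mul_le_mul_of_nonneg_left step5 (Real.exp_nonneg _)
      _ = Real.exp (L * ∫ x, F x ∂(Measure.pi ν) + L ^ 2 * (∑ i : Fin (n+1), (c i) ^ 2) / 8) := by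
          rw [← Real.exp_add, hhint, ← hsum]
          ring_nf

set_option maxHeartbeats 2000000 in
theorem stmt9 {Ω : Type*} [MeasurableSpace Ω] (μ : Measure Ω) [IsProbabilityMeasure μ]
    (n m : ℕ) (Y : Fin n → Ω → (Fin m → ℝ)) (l u : Fin n → Fin m → ℝ)
    (hmeas : ∀ i, Measurable (Y i))
    (hindep : iIndepFun Y μ)
    (hbound : ∀ i j, ∀ᵐ ω ∂μ, l i j ≤ Y i ω j ∧ Y i ω j ≤ u i j)
    (δ : ℝ) (hδ : 0 < δ) :
    μ {ω | 1.12 * (∑ j, Real.sqrt (∑ i, (u i j - l i j) ^ 2)) + δ ≤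
          ∑ j, |(∑ i, Y i ω j) - ∫ ω', ∑ i, Y i ω' j ∂μ|} ≤
      ENNReal.ofReal
        (2 * Real.exp (-(2 * δ ^ 2) / ∑ i, (∑ j, (u i j - l i j)) ^ 2)) := by
  classical
  set S : ℝ := ∑ j, Real.sqrt (∑ i, (u i j - l i j) ^ 2) with hSdef
  set C : ℝ := ∑ i, (∑ j, (u i j - l i j)) ^ 2 with hCdef
  have hae : ∀ᵐ ω ∂μ, ∀ i j, l i j ≤ Y i ω j ∧ Y i ω j ≤ u i j := by
    rw [ae_all_iff]; intro i; rw [ae_all_iff]; exact fun j => hbound i j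
  have hlu : ∀ i j, l i j ≤ u i j := by
    intro i j
    obtain ⟨ω, hω⟩ := hae.exists
    exact (hω i j).1.trans (hω i j).2
  set clip : Fin n → (Fin m → ℝ) → (Fin m → ℝ) :=
    fun i x j => max (l i j) (min (u i j) (x j)) with hclipdef
  have hclipmeas : ∀ i, Measurable (clip i) := fun i =>
    measurable_pi_lambda _ fun j =>
      measurable_const.max (measurable_const.min (measurable_pi_apply j))
  have hclipmem : ∀ i x j, clip i x j ∈ Set.Icc (l i j) (u i j) := fun i x j =>
    ⟨le_max_left _ _, max_le (hlu i j) (min_le_left _ _)⟩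
  have hclipfix : ∀ i (x : Fin m → ℝ), (∀ j, x j ∈ Set.Icc (l i j) (u i j)) → clip i x = x := by
    intro i x hx
    funext j
    simp only [hclipdef]
    rw [min_eq_right (hx j).2, max_eq_right (hx j).1]
  set Y' : Fin n → Ω → (Fin m → ℝ) := fun i => clip i ∘ Y i with hY'def
  have hY'meas : ∀ i, Measurable (Y' i) := fun i => (hclipmeas i).comp (hmeas i)
  have hY'mem : ∀ i ω j, Y' i ω j ∈ Set.Icc (l i j) (u i j) := fun i ω j => hclipmem i _ j
  have hY'fix : ∀ i ω, clip i (Y' i ω) = Y' i ω := fun i ω =>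
    hclipfix i (Y' i ω) (fun j => hY'mem i ω j)
  have hY'ae : ∀ᵐ ω ∂μ, ∀ i, Y' i ω = Y i ω := by
    filter_upwards [hae] with ω hω i
    exact hclipfix i (Y i ω) fun j => hω i j
  have hindep' : iIndepFun Y' μ := hindep.comp clip hclipmeas
  set mi : Fin n → Fin m → ℝ := fun i j => ∫ ω, Y' i ω j ∂μ with hmidef
  have hYij_meas : ∀ i j, Measurable fun ω => Y' i ω j := fun i j =>
    (measurable_pi_apply j).comp (hY'meas i)
  set B : Fin n → Fin m → ℝ := fun i j => max |l i j| |u i j| with hBdef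
  have habsY' : ∀ i ω j, |Y' i ω j| ≤ B i j := fun i ω j =>
    abs_le_max_abs_abs (hY'mem i ω j).1 (hY'mem i ω j).2
  have hYijint : ∀ i j, Integrable (fun ω => Y' i ω j) μ := fun i j =>
    integrable_of_abs_le μ (hYij_meas i j).aestronglyMeasurable (B i j) fun ω => habsY' i ω j
  have hμjsum : ∀ j, (∫ ω', ∑ i, Y i ω' j ∂μ) = ∑ i, mi i j := by
    intro j
    have h1 : (fun ω' => ∑ i, Y i ω' j) =ᵐ[μ] fun ω' => ∑ i, Y' i ω' j := by
      filter_upwards [hY'ae] with ω hω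
      exact (Finset.sum_congr rfl fun i _ => by rw [hω i]).symm
    rw [integral_congr_ae h1, integral_finset_sum _ fun i _ => hYijint i j]
  -- expectation bound per coordinate
  have hexp_j : ∀ j, ∫ ω, |(∑ i, Y' i ω j) - ∫ ω', ∑ i, Y i ω' j ∂μ| ∂μ
      ≤ Real.sqrt (∑ i, (u i j - l i j) ^ 2) := by
    intro j
    set W : Fin n → Ω → ℝ := fun i ω => Y' i ω j - mi i j with hWdef
    have hWmeas : ∀ i, Measurable (W i) := fun i => (hYij_meas i j).sub measurable_const
    have hWmem : ∀ i ω, W i ω ∈ Set.Icc (l i j - mi i j) (u i j - mi i j) := fun i ω =>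
      ⟨sub_le_sub_right (hY'mem i ω j).1 _, sub_le_sub_right (hY'mem i ω j).2 _⟩
    have hWmemℒp : ∀ i, MemLp (W i) 2 μ := fun i =>
      memLp_of_bounded (Filter.Eventually.of_forall (hWmem i))
        (hWmeas i).aestronglyMeasurable 2
    have hWindep : iIndepFun W μ :=
      hindep'.comp (fun i x => x j - mi i j)
        (fun i => (measurable_pi_apply j).sub measurable_const)
    have hvarsum : variance (∑ i, W i) μ = ∑ i, variance (W i) μ :=
      IndepFun.variance_sum (μ := μ) (fun i _ => hWmemℒp i)
        (fun i _ k _ hik => hWindep.indepFun hik)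
    have hvar_le : ∀ i, variance (W i) μ ≤ (u i j - l i j) ^ 2 := by
      intro i
      have h2 := variance_le_sq_of_bounded (μ := μ) (Filter.Eventually.of_forall (hWmem i))
        (hWmeas i).aemeasurable
      have h3 := hlu i j
      nlinarith [h2]
    set Ws : Ω → ℝ := fun ω => ∑ i, W i ω with hWs
    have hWseq : (∑ i, W i) = Ws := by
      funext ω; rw [Finset.sum_apply]
    have hWsmeas : Measurable Ws := by
      apply Finset.measurable_sum
      exact fun i _ => hWmeas i
    set R : ℝ := ∑ i, (B i j + |mi i j|) with hR
    have hWsabs : ∀ ω, |Ws ω| ≤ R := by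
      intro ω
      calc |Ws ω| ≤ ∑ i, |W i ω| := Finset.abs_sum_le_sum_abs _ _
        _ ≤ R := by
          apply Finset.sum_le_sum
          intro i _
          calc |W i ω| ≤ |Y' i ω j| + |mi i j| := abs_sub _ _
            _ ≤ B i j + |mi i j| := by
                have := habsY' i ω j; linarith
    have hWsint : Integrable Ws μ :=
      integrable_of_abs_le μ hWsmeas.aestronglyMeasurable R hWsabs
    have hWsmem : ∀ ω, Ws ω ∈ Set.Icc (-R) R := fun ω =>
      ⟨neg_le_of_abs_le (hWsabs ω), le_of_abs_le (hWsabs ω)⟩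
    have hWsmemℒp : MemLp Ws 2 μ :=
      memLp_of_bounded (Filter.Eventually.of_forall hWsmem) hWsmeas.aestronglyMeasurable 2
    have habsmemℒp : MemLp (fun ω => |Ws ω|) 2 μ :=
      memLp_of_bounded (μ := μ) (a := -R) (b := R)
        (Filter.Eventually.of_forall fun ω =>
          ⟨le_trans (by linarith [hWsabs ω, abs_nonneg (Ws ω)] : -R ≤ (0:ℝ))
            (abs_nonneg _), hWsabs ω⟩)
        hWsmeas.abs.aestronglyMeasurable 2
    have hWint : ∀ i, Integrable (W i) μ := fun i => by
      have := (hYijint i j).sub (integrable_const (mi i j))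
      exact this
    have hmean : ∫ ω, Ws ω ∂μ = 0 := by
      have h0 : ∫ ω, ∑ i, W i ω ∂μ = 0 := by
        rw [integral_finset_sum _ fun i _ => hWint i]
        apply Finset.sum_eq_zero
        intro i _
        simp only [hWdef]
        rw [integral_sub (hYijint i j) (integrable_const _)]
        simp [hmidef]
      exact h0
    -- (E|Ws|)^2 ≤ E Ws^2 = variance Ws
    have hvd := variance_eq_sub (μ := μ) habsmemℒp
    have hnn := variance_nonneg (fun ω => |Ws ω|) μ
    have hsq1 : ((fun ω => |Ws ω|) ^ 2) = fun ω => Ws ω ^ 2 := by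
      funext ω; simp [sq_abs]
    rw [hvd, hsq1] at hnn
    have hvdW := variance_eq_sub (μ := μ) hWsmemℒp
    have hsq2 : (Ws ^ 2) = fun ω => Ws ω ^ 2 := by funext ω; simp
    rw [hsq2, hmean] at hvdW
    -- combine
    have hEabs_sq : (∫ ω, |Ws ω| ∂μ) ^ 2 ≤ variance Ws μ := by
      rw [hvdW]; simpa using hnn
    have hEabs : ∫ ω, |Ws ω| ∂μ ≤ Real.sqrt (variance Ws μ) := by
      have h0 : 0 ≤ ∫ ω, |Ws ω| ∂μ := integral_nonneg fun ω => abs_nonneg _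
      calc ∫ ω, |Ws ω| ∂μ = Real.sqrt ((∫ ω, |Ws ω| ∂μ) ^ 2) := (Real.sqrt_sq h0).symm
        _ ≤ Real.sqrt (variance Ws μ) := Real.sqrt_le_sqrt hEabs_sq
    have hvar_total : variance Ws μ ≤ ∑ i, (u i j - l i j) ^ 2 := by
      rw [← hWseq, hvarsum]
      exact Finset.sum_le_sum fun i _ => hvar_le i
    have hWseval : ∀ ω, (∑ i, Y' i ω j) - (∫ ω', ∑ i, Y i ω' j ∂μ) = Ws ω := by
      intro ω
      rw [hμjsum j, ← Finset.sum_sub_distrib]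
    calc ∫ ω, |(∑ i, Y' i ω j) - ∫ ω', ∑ i, Y i ω' j ∂μ| ∂μ
        = ∫ ω, |Ws ω| ∂μ := by
          apply integral_congr_ae
          apply Filter.Eventually.of_forall
          intro ω
          show |(∑ i, Y' i ω j) - ∫ ω', ∑ i, Y i ω' j ∂μ| = |Ws ω|
          rw [hWseval ω]
      _ ≤ Real.sqrt (variance Ws μ) := hEabs
      _ ≤ Real.sqrt (∑ i, (u i j - l i j) ^ 2) := Real.sqrt_le_sqrt hvar_total
  -- the function on the product space
  set F : (Fin n → (Fin m → ℝ)) → ℝ :=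
    fun x => ∑ j, |(∑ i, clip i (x i) j) - ∫ ω', ∑ i, Y i ω' j ∂μ| with hFdef
  have hFmeas : Measurable F := by
    apply Finset.measurable_sum
    intro j _
    apply Measurable.abs
    apply Measurable.sub _ measurable_const
    apply Finset.measurable_sum
    intro i _
    exact (measurable_pi_apply j).comp ((hclipmeas i).comp (measurable_pi_apply i))
  set K : ℝ := ∑ j, ((∑ i, B i j) + |∫ ω', ∑ i, Y i ω' j ∂μ|) with hKdef
  have hFK : ∀ x, |F x| ≤ K := by
    intro x
    have hnn : 0 ≤ F x := Finset.sum_nonneg fun j _ => abs_nonneg _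
    rw [abs_of_nonneg hnn]
    apply Finset.sum_le_sum
    intro j _
    calc |(∑ i, clip i (x i) j) - ∫ ω', ∑ i, Y i ω' j ∂μ|
        ≤ |∑ i, clip i (x i) j| + |∫ ω', ∑ i, Y i ω' j ∂μ| := abs_sub _ _
      _ ≤ (∑ i, B i j) + |∫ ω', ∑ i, Y i ω' j ∂μ| := by
          have : |∑ i, clip i (x i) j| ≤ ∑ i, B i j := by
            calc |∑ i, clip i (x i) j| ≤ ∑ i, |clip i (x i) j| :=
                Finset.abs_sum_le_sum_abs _ _
              _ ≤ ∑ i, B i j := Finset.sum_le_sum fun i _ =>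
                  abs_le_max_abs_abs (hclipmem i (x i) j).1 (hclipmem i (x i) j).2
          linarith
  have hFc : ∀ (i : Fin n) (x : Fin n → (Fin m → ℝ)) (v : Fin m → ℝ),
      F (Function.update x i v) - F x ≤ ∑ j, (u i j - l i j) := by
    intro i x v
    rw [hFdef]
    simp only
    rw [← Finset.sum_sub_distrib]
    apply Finset.sum_le_sum
    intro j _
    have hterm : (∑ i', clip i' (Function.update x i v i') j) - (∑ i', clip i' (x i') j)
        = clip i v j - clip i (x i) j := by
      rw [← Finset.sum_sub_distrib, Finset.sum_eq_single i]
      · rw [Function.update_self]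
      · intro b _ hb
        rw [Function.update_of_ne hb, sub_self]
      · intro hmem; exact absurd (Finset.mem_univ i) hmem
    have habs := abs_sub_abs_le_abs_sub
      ((∑ i', clip i' (Function.update x i v i') j) - ∫ ω', ∑ i', Y i' ω' j ∂μ)
      ((∑ i', clip i' (x i') j) - ∫ ω', ∑ i', Y i' ω' j ∂μ)
    have heq : ((∑ i', clip i' (Function.update x i v i') j) - ∫ ω', ∑ i', Y i' ω' j ∂μ)
        - ((∑ i', clip i' (x i') j) - ∫ ω', ∑ i', Y i' ω' j ∂μ)
        = clip i v j - clip i (x i) j := by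
      rw [sub_sub_sub_cancel_right, hterm]
    rw [heq] at habs
    refine habs.trans ?_
    have h1 := hclipmem i v j
    have h2 := hclipmem i (x i) j
    rw [abs_le]
    constructor
    · have := h1.1; have := h2.2; have := hlu i j; linarith [h1.1, h2.2]
    · linarith [h1.2, h2.1]
  -- product measure and transport
  set ν : Fin n → Measure (Fin m → ℝ) := fun i => μ.map (Y' i) with hνdef
  haveI hνprob : ∀ i, IsProbabilityMeasure (ν i) := fun i =>
    Measure.isProbabilityMeasure_map (hY'meas i).aemeasurable
  set pm : Measure (Fin n → (Fin m → ℝ)) := Measure.pi ν with hpmdef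
  haveI : IsProbabilityMeasure pm := by rw [hpmdef]; infer_instance
  set T : Ω → (Fin n → (Fin m → ℝ)) := fun ω i => Y' i ω with hTdef
  have hTmeas : Measurable T := measurable_pi_lambda _ fun i => hY'meas i
  have hmap : μ.map T = pm := by
    rw [hpmdef]
    refine (Measure.pi_eq fun s hs => ?_).symm
    rw [Measure.map_apply hTmeas (MeasurableSet.univ_pi hs)]
    have hpre : T ⁻¹' Set.univ.pi s = ⋂ i ∈ Finset.univ, Y' i ⁻¹' s i := by
      ext ω
      simp [hTdef, Set.mem_univ_pi]
    rw [hpre, (iIndepFun_iff_measure_inter_preimage_eq_mul.mp hindep') Finset.univ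
      (fun i _ => hs i)]
    exact Finset.prod_congr rfl fun i _ =>
      (Measure.map_apply (hY'meas i) (hs i)).symm
  -- identification of F ∘ T
  have hFT : ∀ ω, F (T ω) = ∑ j, |(∑ i, Y' i ω j) - ∫ ω', ∑ i, Y i ω' j ∂μ| := by
    intro ω
    rw [hFdef]
    simp only [hTdef, hY'fix]
  -- expectation bound
  have hintj : ∀ j, Integrable (fun ω => |(∑ i, Y' i ω j) - ∫ ω', ∑ i, Y i ω' j ∂μ|) μ := by
    intro j
    apply integrable_of_abs_le μ
      (((Finset.measurable_sum _ fun i _ => hYij_meas i j).sub measurable_const).abs.aestronglyMeasurable)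
      ((∑ i, B i j) + |∫ ω', ∑ i, Y i ω' j ∂μ|)
    intro ω
    rw [abs_abs]
    calc |(∑ i, Y' i ω j) - ∫ ω', ∑ i, Y i ω' j ∂μ|
        ≤ |∑ i, Y' i ω j| + |∫ ω', ∑ i, Y i ω' j ∂μ| := abs_sub _ _
      _ ≤ (∑ i, B i j) + |∫ ω', ∑ i, Y i ω' j ∂μ| := by
          have : |∑ i, Y' i ω j| ≤ ∑ i, B i j :=
            (Finset.abs_sum_le_sum_abs _ _).trans
              (Finset.sum_le_sum fun i _ => habsY' i ω j)
          linarith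
  have hEF_le : ∫ x, F x ∂pm ≤ S := by
    have h1 : ∫ x, F x ∂pm = ∫ ω, F (T ω) ∂μ := by
      rw [← hmap, integral_map hTmeas.aemeasurable hFmeas.aestronglyMeasurable]
    rw [h1]
    have h2 : ∫ ω, F (T ω) ∂μ
        = ∑ j, ∫ ω, |(∑ i, Y' i ω j) - ∫ ω', ∑ i, Y i ω' j ∂μ| ∂μ := by
      rw [integral_congr_ae (Filter.Eventually.of_forall hFT)]
      exact integral_finset_sum _ fun j _ => hintj j
    rw [h2, hSdef]
    exact Finset.sum_le_sum fun j _ => hexp_j j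
  -- event transport
  have hAeq : {ω | 1.12 * S + δ ≤ ∑ j, |(∑ i, Y i ω j) - ∫ ω', ∑ i, Y i ω' j ∂μ|}
      =ᵐ[μ] T ⁻¹' {x | 1.12 * S + δ ≤ F x} := by
    filter_upwards [hY'ae] with ω hω
    have hfe : (∑ j, |(∑ i, Y i ω j) - ∫ ω', ∑ i, Y i ω' j ∂μ|) = F (T ω) := by
      rw [hFT ω]
      exact Finset.sum_congr rfl fun j _ => by
        congr 2
        exact Finset.sum_congr rfl fun i _ => by rw [hω i]
    show (1.12 * S + δ ≤ ∑ j, |(∑ i, Y i ω j) - ∫ ω', ∑ i, Y i ω' j ∂μ|)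
        = (1.12 * S + δ ≤ F (T ω))
    rw [hfe]
  have hmeasB : MeasurableSet {x : Fin n → (Fin m → ℝ) | 1.12 * S + δ ≤ F x} :=
    measurableSet_le measurable_const hFmeas
  have hμA : μ {ω | 1.12 * S + δ ≤ ∑ j, |(∑ i, Y i ω j) - ∫ ω', ∑ i, Y i ω' j ∂μ|}
      = pm {x | 1.12 * S + δ ≤ F x} := by
    rw [measure_congr hAeq, ← hmap, Measure.map_apply hTmeas hmeasB]
  rw [hμA]
  -- split on C = 0
  have hC_nonneg : 0 ≤ C := Finset.sum_nonneg fun i _ => sq_nonneg _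
  rcases eq_or_lt_of_le hC_nonneg with hC0 | hCpos
  · rw [← hC0]
    simp only [div_zero, Real.exp_zero, mul_one]
    calc pm {x | 1.12 * S + δ ≤ F x} ≤ 1 := prob_le_one
      _ ≤ ENNReal.ofReal 2 := by
          rw [show (1 : ENNReal) = ENNReal.ofReal 1 by simp]
          exact ENNReal.ofReal_le_ofReal (by norm_num)
  · -- Chernoff
    have hS_nonneg : 0 ≤ S := Finset.sum_nonneg fun j _ => Real.sqrt_nonneg _
    set EF : ℝ := ∫ x, F x ∂pm with hEFdef
    set t : ℝ := 1.12 * S + δ - EF with htdef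
    have hδt : δ ≤ t := by
      have h112 : EF ≤ 1.12 * S := le_trans hEF_le (by nlinarith [hS_nonneg])
      rw [htdef]; linarith
    have htpos : 0 < t := lt_of_lt_of_le hδ hδt
    set L : ℝ := 4 * t / C with hLdef
    have hL : 0 ≤ L := by positivity
    have hexpint : Integrable (fun x => Real.exp (L * F x)) pm := by
      apply integrable_of_abs_le pm ((hFmeas.const_mul L).exp.aestronglyMeasurable)
        (Real.exp (|L| * K))
      intro x
      rw [Real.abs_exp]
      apply Real.exp_le_exp.mpr
      calc L * F x ≤ |L| * |F x| := by rw [← abs_mul]; exact le_abs_self _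
        _ ≤ |L| * K := mul_le_mul_of_nonneg_left (hFK x) (abs_nonneg L)
    have hchern := measure_ge_le_exp_mul_mgf (μ := pm) (X := F) (1.12 * S + δ) hL hexpint
    have hmgf : mgf F pm L ≤ Real.exp (L * EF + L ^ 2 * C / 8) := by
      have h := mcdiarmid_mgf n ν hνprob F hFmeas K hFK
        (fun i => ∑ j, (u i j - l i j)) hFc L
      rw [mgf]
      refine h.trans (le_of_eq ?_)
      congr 1
    have hreal : (pm {x | 1.12 * S + δ ≤ F x}).toReal
        ≤ 2 * Real.exp (-(2 * δ ^ 2) / C) := by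
      calc (pm {x | 1.12 * S + δ ≤ F x}).toReal
          ≤ Real.exp (-L * (1.12 * S + δ)) * mgf F pm L := hchern
        _ ≤ Real.exp (-L * (1.12 * S + δ)) * Real.exp (L * EF + L ^ 2 * C / 8) :=
            mul_le_mul_of_nonneg_left hmgf (Real.exp_nonneg _)
        _ = Real.exp (-L * t + L ^ 2 * C / 8) := by
            rw [← Real.exp_add]
            congr 1
            rw [htdef]
            ring
        _ = Real.exp (-(2 * t ^ 2) / C) := by
            congr 1
            rw [hLdef]
            field_simp
            ring
        _ ≤ Real.exp (-(2 * δ ^ 2) / C) := by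
            apply Real.exp_le_exp.mpr
            have h1 : 2 * δ ^ 2 ≤ 2 * t ^ 2 := by nlinarith
            have h2 : (2 * δ ^ 2) / C ≤ (2 * t ^ 2) / C := (div_le_div_iff_of_pos_right hCpos).mpr h1
            rw [neg_div, neg_div]
            exact neg_le_neg h2
        _ ≤ 2 * Real.exp (-(2 * δ ^ 2) / C) := by
            have hp := Real.exp_pos (-(2 * δ ^ 2) / C)
            linarith
    calc pm {x | 1.12 * S + δ ≤ F x}
        = ENNReal.ofReal ((pm {x | 1.12 * S + δ ≤ F x}).toReal) :=
          (ENNReal.ofReal_toReal (measure_ne_top _ _)).symm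
      _ ≤ ENNReal.ofReal (2 * Real.exp (-(2 * δ ^ 2) / C)) :=
          ENNReal.ofReal_le_ofReal hreal
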